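/- arXiv:2510.26344 — 2 statements merged into one kernel-verified Lean document; each statement's English description precedes it below -/
import Mathlib

section
/- Convergence of the estimated graph embedding (conclusion of Theorem 1, finite-dimensional form): Let S be a finite nonempty index set. For each j ∈ S, let (X_t^j, Y_t^j)_{t≥1} be an i.i.d. sequence of pairs of random vectors in ℝ^{d_x} × ℝ^{d_y} on a common probability space, almost surely bounded in Euclidean norm, with C_XX^j := E[X_1^j (X_1^j)ᵀ] positive definite and C_YX^j := E[Y_1^j (X_1^j)ᵀ]. Let (λ_T)_{T≥1} be positive reals with λ_T → 0 and T·λ_T → ∞, and define the estimators Ĉ_T^j := ((1/T)Σ_{t=1}^T Y_t^j (X_t^j)ᵀ)·((1/T)Σ_{t=1}^T X_t^j (X_t^j)ᵀ + λ_T I)^{-1} and the targets C^j := C_YX^j·(C_XX^j)^{-1}. Then for any fixed vectors v_j ∈ ℝ^{d_x} (j ∈ S), almost surely ‖Σ_{j∈S} Ĉ_T^j v_j − Σ_{j∈S} C^j v_j‖ → 0 as T → ∞. -/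
open Topology MeasureTheory ProbabilityTheory Filter Matrix

/-- Euclidean norm of a finite real vector. -/
noncomputable def vecNorm {n : Type*} [Fintype n] (v : n → ℝ) : ℝ :=
  Real.sqrt (∑ i, v i ^ 2)

/-- Spectral norm (ℓ²-operator norm) of a real matrix. -/
noncomputable def specNorm {m n : Type*} [Fintype m] [Fintype n] (M : Matrix m n ℝ) : ℝ :=
  sSup {r : ℝ | ∃ x : n → ℝ, ∑ i, x i ^ 2 = 1 ∧ r = vecNorm (M.mulVec x)}

/-- Smallest eigenvalue (Rayleigh quotient form) of a symmetric real matrix. -/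
noncomputable def eigMin {n : Type*} [Fintype n] (M : Matrix n n ℝ) : ℝ :=
  sInf {r : ℝ | ∃ x : n → ℝ, ∑ i, x i ^ 2 = 1 ∧ r = x ⬝ᵥ M.mulVec x}

/-- Largest eigenvalue (Rayleigh quotient form) of a symmetric real matrix. -/
noncomputable def eigMax {n : Type*} [Fintype n] (M : Matrix n n ℝ) : ℝ :=
  sSup {r : ℝ | ∃ x : n → ℝ, ∑ i, x i ^ 2 = 1 ∧ r = x ⬝ᵥ M.mulVec x}

/-- Entrywise expectation of a random matrix. -/
noncomputable def mExp {Ω : Type*} [MeasurableSpace Ω] (μ : Measure Ω)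
    {m n : Type*} (X : Ω → Matrix m n ℝ) : Matrix m n ℝ :=
  Matrix.of fun i j => ∫ ω, X ω i j ∂μ

lemma abs_entry_le_vecNorm {n : Type*} [Fintype n] (v : n → ℝ) (i : n) :
    |v i| ≤ vecNorm v := by
  rw [← Real.sqrt_sq_eq_abs]
  exact Real.sqrt_le_sqrt (Finset.single_le_sum (f := fun i => v i ^ 2)
    (fun i _ => sq_nonneg _) (Finset.mem_univ i))

lemma slln_entry {Ω : Type*} [MeasurableSpace Ω] (μ : Measure Ω) [IsProbabilityMeasure μ]
    {a b : ℕ} (U : ℕ → Ω → (Fin a → ℝ)) (V : ℕ → Ω → (Fin b → ℝ))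
    (hmeas : ∀ t, Measurable (fun ω => (U t ω, V t ω)))
    (hindep : iIndepFun (fun t ω => (U t ω, V t ω)) μ)
    (hident : ∀ t, IdentDistrib (fun ω => (U t ω, V t ω)) (fun ω => (U 0 ω, V 0 ω)) μ μ)
    (κu κv : ℝ) (hbd : ∀ᵐ ω ∂μ, vecNorm (U 0 ω) ≤ κu ∧ vecNorm (V 0 ω) ≤ κv)
    (i : Fin b) (k : Fin a) :
    ∀ᵐ ω ∂μ, Tendsto (fun T : ℕ => (T : ℝ)⁻¹ * ∑ t ∈ Finset.range T, V t ω i * U t ω k)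
      atTop (𝓝 (∫ ω, V 0 ω i * U 0 ω k ∂μ)) := by
  set g : (Fin a → ℝ) × (Fin b → ℝ) → ℝ := fun p => p.2 i * p.1 k with hg
  have hgm : Measurable g :=
    ((measurable_pi_apply i).comp measurable_snd).mul ((measurable_pi_apply k).comp measurable_fst)
  set Z : ℕ → Ω → ℝ := fun t ω => V t ω i * U t ω k with hZ
  have hZm : ∀ t, Measurable (Z t) := fun t => hgm.comp (hmeas t)
  have hint : Integrable (Z 0) μ := by
    refine (integrable_const (|κv| * |κu|)).mono' (hZm 0).aestronglyMeasurable ?_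
    filter_upwards [hbd] with ω ⟨hu, hv⟩
    have h1 : |V 0 ω i| ≤ |κv| := le_trans (abs_entry_le_vecNorm _ _)
      (le_trans hv (le_abs_self _))
    have h2 : |U 0 ω k| ≤ |κu| := le_trans (abs_entry_le_vecNorm _ _)
      (le_trans hu (le_abs_self _))
    calc ‖Z 0 ω‖ = |V 0 ω i| * |U 0 ω k| := by simp [Z, abs_mul]
    _ ≤ |κv| * |κu| := mul_le_mul h1 h2 (abs_nonneg _) (abs_nonneg _)
  have hpind : Pairwise (Function.onFun (IndepFun · · μ) Z) := fun s t hst =>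
    (hindep.indepFun hst).comp hgm hgm
  have hpid : ∀ t, IdentDistrib (Z t) (Z 0) μ μ := fun t => (hident t).comp hgm
  filter_upwards [strong_law_ae_real Z hint hpind hpid] with ω hω
  simpa [div_eq_inv_mul] using hω

set_option maxHeartbeats 1000000 in
/-- Convergence of the estimated graph embedding: for each index `j` in a
finite nonempty set `S`, an i.i.d. almost-surely bounded sequence of pairs
`(X j t, Y j t)` (sample index `t = 0, 1, …`, with `X j 0` playing the role of `X_1^j`)
with positive definite `C_XX^j` yields regularized estimators whose aggregated action on
fixed vectors `v j` converges almost surely to that of the targets `C_YX^j (C_XX^j)⁻¹`. -/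
theorem stmt1 {Ω : Type*} [MeasurableSpace Ω] (μ : Measure Ω) [IsProbabilityMeasure μ]
    {S : Type*} [Fintype S] [Nonempty S]
    (dx dy : ℕ)
    (X : S → ℕ → Ω → (Fin dx → ℝ)) (Y : S → ℕ → Ω → (Fin dy → ℝ))
    (hmeas : ∀ j t, Measurable (fun ω => (X j t ω, Y j t ω)))
    (hindep : ∀ j, iIndepFun (fun t ω => (X j t ω, Y j t ω)) μ)
    (hident : ∀ j t, IdentDistrib (fun ω => (X j t ω, Y j t ω))
      (fun ω => (X j 0 ω, Y j 0 ω)) μ μ)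
    (hbd : ∀ j, ∃ κx κy : ℝ, ∀ᵐ ω ∂μ, vecNorm (X j 0 ω) ≤ κx ∧ vecNorm (Y j 0 ω) ≤ κy)
    (CXX : S → Matrix (Fin dx) (Fin dx) ℝ) (CYX : S → Matrix (Fin dy) (Fin dx) ℝ)
    (hCXX : ∀ j, CXX j = mExp μ (fun ω => vecMulVec (X j 0 ω) (X j 0 ω)))
    (hCYX : ∀ j, CYX j = mExp μ (fun ω => vecMulVec (Y j 0 ω) (X j 0 ω)))
    (hpos : ∀ j, (CXX j).PosDef)
    (lam : ℕ → ℝ) (hlampos : ∀ T, 0 < lam T)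
    (hlam0 : Tendsto lam atTop (nhds 0))
    (hTlam : Tendsto (fun T : ℕ => (T : ℝ) * lam T) atTop atTop)
    (v : S → (Fin dx → ℝ)) :
    ∀ᵐ ω ∂μ, Tendsto (fun T : ℕ =>
      vecNorm ((∑ j : S,
          (((T : ℝ)⁻¹ • ∑ t ∈ Finset.range T, vecMulVec (Y j t ω) (X j t ω)) *
            ((T : ℝ)⁻¹ • (∑ t ∈ Finset.range T, vecMulVec (X j t ω) (X j t ω)) +
              lam T • 1)⁻¹).mulVec (v j))
        - ∑ j : S, ((CYX j) * (CXX j)⁻¹).mulVec (v j))) atTop (nhds 0) := by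
  classical
  have hYX : ∀ᵐ ω ∂μ, ∀ (j : S) (i : Fin dy) (k : Fin dx),
      Tendsto (fun T : ℕ => (T : ℝ)⁻¹ * ∑ t ∈ Finset.range T, Y j t ω i * X j t ω k)
        atTop (𝓝 ((CYX j) i k)) := by
    rw [ae_all_iff]; intro j
    rw [ae_all_iff]; intro i
    rw [ae_all_iff]; intro k
    obtain ⟨κx, κy, hb⟩ := hbd j
    have he : (CYX j) i k = ∫ ω, Y j 0 ω i * X j 0 ω k ∂μ := by
      simp [hCYX j, mExp, Matrix.vecMulVec_apply]
    rw [he]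
    exact slln_entry μ (X j) (Y j) (hmeas j) (hindep j) (hident j) κx κy hb i k
  have hXX : ∀ᵐ ω ∂μ, ∀ (j : S) (i k : Fin dx),
      Tendsto (fun T : ℕ => (T : ℝ)⁻¹ * ∑ t ∈ Finset.range T, X j t ω i * X j t ω k)
        atTop (𝓝 ((CXX j) i k)) := by
    rw [ae_all_iff]; intro j
    rw [ae_all_iff]; intro i
    rw [ae_all_iff]; intro k
    obtain ⟨κx, κy, hb⟩ := hbd j
    have he : (CXX j) i k = ∫ ω, X j 0 ω i * X j 0 ω k ∂μ := by
      simp [hCXX j, mExp, Matrix.vecMulVec_apply]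
    rw [he]
    have hhm : Measurable (fun p : (Fin dx → ℝ) × (Fin dy → ℝ) => (p.1, p.1)) :=
      measurable_fst.prodMk measurable_fst
    exact slln_entry μ (X j) (X j)
      (fun t => hhm.comp (hmeas j t))
      ((hindep j).comp (fun _ p => (p.1, p.1)) (fun _ => hhm))
      (fun t => (hident j t).comp hhm)
      κx κx (by filter_upwards [hb] with ω hω; exact ⟨hω.1, hω.1⟩) i k
  filter_upwards [hYX, hXX] with ω hA hB
  have hmatYX : ∀ j, Tendsto (fun T : ℕ =>
      (T : ℝ)⁻¹ • ∑ t ∈ Finset.range T, vecMulVec (Y j t ω) (X j t ω)) atTop (𝓝 (CYX j)) := by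
    intro j
    refine tendsto_pi_nhds.mpr fun i => ?_
    rw [tendsto_pi_nhds]; intro k
    simpa [Matrix.smul_apply, Matrix.sum_apply, Matrix.vecMulVec_apply] using hA j i k
  have hmatXX : ∀ j, Tendsto (fun T : ℕ =>
      (T : ℝ)⁻¹ • (∑ t ∈ Finset.range T, vecMulVec (X j t ω) (X j t ω)) + lam T • 1)
      atTop (𝓝 (CXX j)) := by
    intro j
    have h1 : Tendsto (fun T : ℕ =>
        (T : ℝ)⁻¹ • ∑ t ∈ Finset.range T, vecMulVec (X j t ω) (X j t ω)) atTop (𝓝 (CXX j)) := by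
      refine tendsto_pi_nhds.mpr fun i => ?_
      rw [tendsto_pi_nhds]; intro k
      simpa [Matrix.smul_apply, Matrix.sum_apply, Matrix.vecMulVec_apply] using hB j i k
    have h2 : Tendsto (fun T : ℕ => lam T • (1 : Matrix (Fin dx) (Fin dx) ℝ)) atTop
        (𝓝 ((0 : ℝ) • (1 : Matrix (Fin dx) (Fin dx) ℝ))) := hlam0.smul_const _
    simpa using h1.add h2
  have hsum : Tendsto (fun T : ℕ => ∑ j : S,
      (((T : ℝ)⁻¹ • ∑ t ∈ Finset.range T, vecMulVec (Y j t ω) (X j t ω)) *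
        ((T : ℝ)⁻¹ • (∑ t ∈ Finset.range T, vecMulVec (X j t ω) (X j t ω)) +
          lam T • 1)⁻¹).mulVec (v j)) atTop
      (𝓝 (∑ j : S, ((CYX j) * (CXX j)⁻¹).mulVec (v j))) := by
    refine tendsto_finset_sum _ (fun j _ => ?_)
    have hic : ContinuousAt Inv.inv (CXX j) := by
      refine continuousAt_matrix_inv _ ?_
      rw [Ring.inverse_eq_inv']
      exact continuousAt_inv₀ (hpos j).det_pos.ne'
    have hinv : Tendsto (fun T : ℕ =>
        ((T : ℝ)⁻¹ • (∑ t ∈ Finset.range T, vecMulVec (X j t ω) (X j t ω)) + lam T • 1)⁻¹)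
        atTop (𝓝 (CXX j)⁻¹) := hic.tendsto.comp (hmatXX j)
    have hmvc : Continuous (fun p : Matrix (Fin dy) (Fin dx) ℝ × Matrix (Fin dx) (Fin dx) ℝ =>
        (p.1 * p.2).mulVec (v j)) :=
      (continuous_fst.matrix_mul continuous_snd).matrix_mulVec continuous_const
    exact ((hmvc.tendsto (CYX j, (CXX j)⁻¹)).comp ((hmatYX j).prodMk_nhds hinv)).congr
      (fun T => rfl)
  have hdiff := hsum.sub (tendsto_const_nhds
    (x := ∑ j : S, ((CYX j) * (CXX j)⁻¹).mulVec (v j)) (f := atTop))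
  rw [sub_self] at hdiff
  have hvc : Continuous (vecNorm : (Fin dy → ℝ) → ℝ) :=
    Real.continuous_sqrt.comp (continuous_finset_sum _ fun i _ => (continuous_apply i).pow 2)
  have h0 : vecNorm (0 : Fin dy → ℝ) = 0 := by simp [vecNorm]
  have hfin := (hvc.tendsto 0).comp hdiff
  rw [h0] at hfin
  exact hfin
end

section
/- Deterministic perturbation bound for the regularized conditional operator (core estimate of the Propositions on sub-operator convergence): Let A, Â ∈ ℝ^{d×d} be symmetric with A positive definite and Â positive semidefinite, let B ∈ ℝ^{m×m} be symmetric positive semidefinite, and suppose C ∈ ℝ^{m×d} factorizes as C = B^{1/2} V A^{1/2} for some matrix V with ‖V‖ ≤ 1. Let Ĉ ∈ ℝ^{m×d} be arbitrary and λ > 0. Then ‖C·A^{-1} − Ĉ·(Â + λI)^{-1}‖ ≤ √(λ_max(B))·(‖Â − A‖ + λ)/(√(λ_min(A))·λ_min(Â + λI)) + ‖Ĉ − C‖/λ_min(Â + λI). -/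
open MeasureTheory ProbabilityTheory Filter Matrix

namespace Matrix.PosSemidef

open scoped ComplexOrder

/-- The positive semidefinite square root of a positive semidefinite matrix -/
noncomputable def sqrt {n : Type*} [Fintype n] [DecidableEq n] {𝕜 : Type*} [RCLike 𝕜]
    {A : Matrix n n 𝕜} (hA : A.PosSemidef) : Matrix n n 𝕜 :=
  (hA.1.eigenvectorUnitary : Matrix n n 𝕜) *
    diagonal ((RCLike.ofReal : ℝ → 𝕜) ∘ Real.sqrt ∘ hA.1.eigenvalues) *
  (star hA.1.eigenvectorUnitary : Matrix n n 𝕜)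

end Matrix.PosSemidef

namespace Matrix.PosSemidef

open scoped ComplexOrder

lemma sqrt_mul_self {n : Type*} [Fintype n] [DecidableEq n] {𝕜 : Type*} [RCLike 𝕜]
    {A : Matrix n n 𝕜} (hA : A.PosSemidef) : hA.sqrt * hA.sqrt = A := by
  have hu : (star hA.1.eigenvectorUnitary : Matrix n n 𝕜) * hA.1.eigenvectorUnitary = 1 :=
    Unitary.coe_star_mul_self _
  unfold sqrt
  simp only [Matrix.mul_assoc]
  rw [← Matrix.mul_assoc (star hA.1.eigenvectorUnitary : Matrix n n 𝕜), hu, Matrix.one_mul,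
    ← Matrix.mul_assoc (diagonal _), diagonal_mul_diagonal]
  conv_rhs => rw [hA.1.spectral_theorem]
  rw [Unitary.conjStarAlgAut_apply, Matrix.mul_assoc]
  congr 3
  funext i
  simp only [Function.comp_apply, ← RCLike.ofReal_mul,
    Real.mul_self_sqrt (hA.eigenvalues_nonneg i)]

lemma sqrt_isHermitian {n : Type*} [Fintype n] [DecidableEq n] {𝕜 : Type*} [RCLike 𝕜]
    {A : Matrix n n 𝕜} (hA : A.PosSemidef) : hA.sqrt.IsHermitian := by
  have hd : star (RCLike.ofReal ∘ Real.sqrt ∘ hA.1.eigenvalues : n → 𝕜)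
      = RCLike.ofReal ∘ Real.sqrt ∘ hA.1.eigenvalues := by
    funext i; simp [RCLike.star_def]
  unfold sqrt Matrix.IsHermitian
  simp only [Matrix.conjTranspose_mul, Matrix.diagonal_conjTranspose, Matrix.mul_assoc, hd,
    Matrix.star_eq_conjTranspose, Matrix.conjTranspose_conjTranspose]

end Matrix.PosSemidef

section Helpers

noncomputable def toCLM {m n : ℕ} (M : Matrix (Fin m) (Fin n) ℝ) :
    EuclideanSpace ℝ (Fin n) →L[ℝ] EuclideanSpace ℝ (Fin m) :=
  LinearMap.toContinuousLinearMap (Matrix.toEuclideanLin M)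

lemma toCLM_apply {m n : ℕ} (M : Matrix (Fin m) (Fin n) ℝ) (y : EuclideanSpace ℝ (Fin n)) :
    toCLM M y = (WithLp.equiv 2 (Fin m → ℝ)).symm (M *ᵥ (WithLp.equiv 2 (Fin n → ℝ) y)) := rfl

lemma norm_symm {n : ℕ} (v : Fin n → ℝ) :
    ‖(WithLp.equiv 2 (Fin n → ℝ)).symm v‖ = vecNorm v := by
  rw [EuclideanSpace.norm_eq]
  unfold vecNorm
  congr 1
  refine Finset.sum_congr rfl fun i _ => ?_
  simp [Real.norm_eq_abs, sq_abs]

lemma norm_euc {n : ℕ} (y : EuclideanSpace ℝ (Fin n)) :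
    ‖y‖ = vecNorm (WithLp.equiv 2 (Fin n → ℝ) y) := by
  rw [← norm_symm]; simp

lemma sumsq_nonneg {n : ℕ} (v : Fin n → ℝ) : (0:ℝ) ≤ ∑ i, v i ^ 2 :=
  Finset.sum_nonneg fun i _ => sq_nonneg _

lemma specNorm_eq {m n : ℕ} (M : Matrix (Fin m) (Fin n) ℝ) : specNorm M = ‖toCLM M‖ := by
  have hset : {r : ℝ | ∃ x : Fin n → ℝ, ∑ i, x i ^ 2 = 1 ∧ r = vecNorm (M.mulVec x)}
      = {r : ℝ | ∃ y : EuclideanSpace ℝ (Fin n), ‖y‖ = 1 ∧ r = ‖toCLM M y‖} := by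
    ext r
    constructor
    · rintro ⟨x, hx, rfl⟩
      refine ⟨(WithLp.equiv 2 (Fin n → ℝ)).symm x, ?_, ?_⟩
      · rw [norm_symm]; unfold vecNorm; rw [hx]; exact Real.sqrt_one
      · rw [toCLM_apply, norm_symm]; simp
    · rintro ⟨y, hy, rfl⟩
      refine ⟨WithLp.equiv 2 (Fin n → ℝ) y, ?_, ?_⟩
      · have := norm_euc y
        rw [hy] at this
        unfold vecNorm at this
        exact (Real.sqrt_eq_one.mp this.symm)
      · rw [toCLM_apply, norm_symm]
  rw [specNorm, hset]
  rcases Nat.eq_zero_or_pos n with hn | hn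
  · subst hn
    have hS : {r : ℝ | ∃ y : EuclideanSpace ℝ (Fin 0), ‖y‖ = 1 ∧ r = ‖toCLM M y‖} = ∅ := by
      ext r
      simp only [Set.mem_setOf_eq, Set.mem_empty_iff_false, iff_false, not_exists]
      rintro y ⟨hy, -⟩
      have : (WithLp.equiv 2 (Fin 0 → ℝ)) y = 0 := Subsingleton.elim _ _
      rw [norm_euc y, this] at hy
      unfold vecNorm at hy
      simp at hy
    rw [hS, Real.sSup_empty]
    have : ∀ y : EuclideanSpace ℝ (Fin 0), toCLM M y = 0 := by
      intro y
      rw [toCLM_apply]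
      have : M *ᵥ (WithLp.equiv 2 (Fin 0 → ℝ)) y = 0 := by
        funext i; simp [Matrix.mulVec, dotProduct]
      rw [this]; simp
    have h0 : ‖toCLM M‖ = 0 := by
      have : toCLM M = 0 := ContinuousLinearMap.ext fun y => by rw [this y]; rfl
      rw [this, norm_zero]
    rw [h0]
  · have hne : Nonempty (Fin n) := ⟨⟨0, hn⟩⟩
    obtain ⟨i0⟩ := hne
    set e : EuclideanSpace ℝ (Fin n) := EuclideanSpace.single i0 (1:ℝ) with he
    have hee : ‖e‖ = 1 := by rw [he, EuclideanSpace.norm_single]; norm_num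
    have hne' : {r : ℝ | ∃ y : EuclideanSpace ℝ (Fin n), ‖y‖ = 1 ∧ r = ‖toCLM M y‖}.Nonempty :=
      ⟨‖toCLM M e‖, e, hee, rfl⟩
    have hbdd : BddAbove {r : ℝ | ∃ y : EuclideanSpace ℝ (Fin n), ‖y‖ = 1 ∧ r = ‖toCLM M y‖} := by
      refine ⟨‖toCLM M‖, ?_⟩
      rintro r ⟨y, hy, rfl⟩
      simpa [hy] using (toCLM M).le_opNorm y
    apply le_antisymm
    · apply csSup_le hne'
      rintro r ⟨y, hy, rfl⟩
      simpa [hy] using (toCLM M).le_opNorm y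
    · have hnn : 0 ≤ sSup {r : ℝ | ∃ y : EuclideanSpace ℝ (Fin n), ‖y‖ = 1 ∧ r = ‖toCLM M y‖} :=
        le_trans (norm_nonneg _) (le_csSup hbdd ⟨e, hee, rfl⟩)
      apply (toCLM M).opNorm_le_bound hnn
      intro x
      rcases eq_or_ne x 0 with rfl | hx
      · simp
      · have hu : ‖(‖x‖⁻¹ : ℝ) • x‖ = 1 := norm_smul_inv_norm hx
        have hmem : ‖toCLM M ((‖x‖⁻¹ : ℝ) • x)‖ ∈
            {r : ℝ | ∃ y : EuclideanSpace ℝ (Fin n), ‖y‖ = 1 ∧ r = ‖toCLM M y‖} :=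
          ⟨_, hu, rfl⟩
        have hle := le_csSup hbdd hmem
        rw [_root_.map_smul, norm_smul] at hle
        have hxpos : (0:ℝ) < ‖x‖ := norm_pos_iff.mpr hx
        rw [norm_inv, norm_norm] at hle
        calc ‖toCLM M x‖ = ‖x‖ * (‖x‖⁻¹ * ‖toCLM M x‖) := by field_simp
        _ ≤ ‖x‖ * sSup {r : ℝ | ∃ y : EuclideanSpace ℝ (Fin n), ‖y‖ = 1 ∧ r = ‖toCLM M y‖} :=
            mul_le_mul_of_nonneg_left hle hxpos.le
        _ = _ := mul_comm _ _

end Helpers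
section Rayleigh

lemma isCompact_rayleigh {n : ℕ} (M : Matrix (Fin n) (Fin n) ℝ) :
    IsCompact {r : ℝ | ∃ x : Fin n → ℝ, ∑ i, x i ^ 2 = 1 ∧ r = x ⬝ᵥ M.mulVec x} := by
  have himg : {r : ℝ | ∃ x : Fin n → ℝ, ∑ i, x i ^ 2 = 1 ∧ r = x ⬝ᵥ M.mulVec x}
      = (fun x : Fin n → ℝ => x ⬝ᵥ M.mulVec x) '' {x : Fin n → ℝ | ∑ i, x i ^ 2 = 1} := by
    ext r
    constructor
    · rintro ⟨x, hx, rfl⟩; exact ⟨x, hx, rfl⟩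
    · rintro ⟨x, hx, rfl⟩; exact ⟨x, hx, rfl⟩
  rw [himg]
  have hcont : Continuous fun x : Fin n → ℝ => x ⬝ᵥ M.mulVec x := by
    simp only [dotProduct, Matrix.mulVec]
    exact continuous_finset_sum _ fun i _ =>
      (continuous_apply i).mul (continuous_finset_sum _ fun j _ =>
        (continuous_const.mul (continuous_apply j)))
  refine IsCompact.image ?_ hcont
  apply Metric.isCompact_of_isClosed_isBounded
  · exact isClosed_eq (continuous_finset_sum _ fun i _ => (continuous_apply i).pow 2)
      continuous_const
  · apply Bornology.IsBounded.subset (Metric.isBounded_closedBall (x := (0 : Fin n → ℝ)) (r := 1))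
    intro x hx
    rw [Metric.mem_closedBall, dist_zero_right]
    refine (pi_norm_le_iff_of_nonneg zero_le_one).mpr fun i => ?_
    have h1 : x i ^ 2 ≤ 1 := by
      calc x i ^ 2 ≤ ∑ j, x j ^ 2 :=
        Finset.single_le_sum (fun j _ => sq_nonneg (x j)) (Finset.mem_univ i)
      _ = 1 := hx
    rw [Real.norm_eq_abs]
    nlinarith [abs_nonneg (x i), sq_abs (x i)]

lemma bddAbove_rayleigh {n : ℕ} (M : Matrix (Fin n) (Fin n) ℝ) :
    BddAbove {r : ℝ | ∃ x : Fin n → ℝ, ∑ i, x i ^ 2 = 1 ∧ r = x ⬝ᵥ M.mulVec x} :=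
  (isCompact_rayleigh M).bddAbove

lemma bddBelow_rayleigh {n : ℕ} (M : Matrix (Fin n) (Fin n) ℝ) :
    BddBelow {r : ℝ | ∃ x : Fin n → ℝ, ∑ i, x i ^ 2 = 1 ∧ r = x ⬝ᵥ M.mulVec x} :=
  (isCompact_rayleigh M).bddBelow

lemma rayleigh_le_eigMax {n : ℕ} (M : Matrix (Fin n) (Fin n) ℝ) (x : Fin n → ℝ) :
    x ⬝ᵥ M.mulVec x ≤ eigMax M * ∑ i, x i ^ 2 := by
  rcases eq_or_ne (∑ i, x i ^ 2) 0 with h0 | h0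
  · have hx : x = 0 := by
      funext i
      have := (Finset.sum_eq_zero_iff_of_nonneg (fun j _ => sq_nonneg (x j))).mp h0 i
        (Finset.mem_univ i)
      exact (pow_eq_zero_iff two_ne_zero).mp this
    subst hx
    simp
  · have hpos : 0 < ∑ i, x i ^ 2 := lt_of_le_of_ne (sumsq_nonneg x) (Ne.symm h0)
    set c := Real.sqrt (∑ i, x i ^ 2) with hc
    have hcpos : 0 < c := Real.sqrt_pos.mpr hpos
    have hc2 : c ^ 2 = ∑ i, x i ^ 2 := Real.sq_sqrt hpos.le
    set u := c⁻¹ • x with hu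
    have husq : ∑ i, u i ^ 2 = 1 := by
      rw [hu]
      simp only [Pi.smul_apply, smul_eq_mul, mul_pow, ← Finset.mul_sum]
      rw [← hc2]
      field_simp
    have hmem : u ⬝ᵥ M.mulVec u ∈
        {r : ℝ | ∃ y : Fin n → ℝ, ∑ i, y i ^ 2 = 1 ∧ r = y ⬝ᵥ M.mulVec y} := ⟨u, husq, rfl⟩
    have hle : u ⬝ᵥ M.mulVec u ≤ eigMax M := le_csSup (bddAbove_rayleigh M) hmem
    have hexp : u ⬝ᵥ M.mulVec u = c⁻¹ * (c⁻¹ * (x ⬝ᵥ M.mulVec x)) := by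
      rw [hu, smul_dotProduct, Matrix.mulVec_smul, dotProduct_smul]
      simp [smul_eq_mul]
    have h1 : c ^ 2 * (u ⬝ᵥ M.mulVec u) ≤ c ^ 2 * eigMax M :=
      mul_le_mul_of_nonneg_left hle (sq_nonneg c)
    have h2 : c ^ 2 * (u ⬝ᵥ M.mulVec u) = x ⬝ᵥ M.mulVec x := by
      rw [hexp]; field_simp
    rw [h2, hc2] at h1
    linarith [h1]

lemma eigMin_le_rayleigh {n : ℕ} (M : Matrix (Fin n) (Fin n) ℝ) (x : Fin n → ℝ) :
    eigMin M * ∑ i, x i ^ 2 ≤ x ⬝ᵥ M.mulVec x := by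
  rcases eq_or_ne (∑ i, x i ^ 2) 0 with h0 | h0
  · have hx : x = 0 := by
      funext i
      have := (Finset.sum_eq_zero_iff_of_nonneg (fun j _ => sq_nonneg (x j))).mp h0 i
        (Finset.mem_univ i)
      exact (pow_eq_zero_iff two_ne_zero).mp this
    subst hx
    simp
  · have hpos : 0 < ∑ i, x i ^ 2 := lt_of_le_of_ne (sumsq_nonneg x) (Ne.symm h0)
    set c := Real.sqrt (∑ i, x i ^ 2) with hc
    have hcpos : 0 < c := Real.sqrt_pos.mpr hpos
    have hc2 : c ^ 2 = ∑ i, x i ^ 2 := Real.sq_sqrt hpos.le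
    set u := c⁻¹ • x with hu
    have husq : ∑ i, u i ^ 2 = 1 := by
      rw [hu]
      simp only [Pi.smul_apply, smul_eq_mul, mul_pow, ← Finset.mul_sum]
      rw [← hc2]
      field_simp
    have hmem : u ⬝ᵥ M.mulVec u ∈
        {r : ℝ | ∃ y : Fin n → ℝ, ∑ i, y i ^ 2 = 1 ∧ r = y ⬝ᵥ M.mulVec y} := ⟨u, husq, rfl⟩
    have hle : eigMin M ≤ u ⬝ᵥ M.mulVec u := csInf_le (bddBelow_rayleigh M) hmem
    have hexp : u ⬝ᵥ M.mulVec u = c⁻¹ * (c⁻¹ * (x ⬝ᵥ M.mulVec x)) := by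
      rw [hu, smul_dotProduct, Matrix.mulVec_smul, dotProduct_smul]
      simp [smul_eq_mul]
    have h1 : c ^ 2 * eigMin M ≤ c ^ 2 * (u ⬝ᵥ M.mulVec u) :=
      mul_le_mul_of_nonneg_left hle (sq_nonneg c)
    have h2 : c ^ 2 * (u ⬝ᵥ M.mulVec u) = x ⬝ᵥ M.mulVec x := by
      rw [hexp]; field_simp
    rw [h2, hc2] at h1
    linarith [h1]

lemma exists_unitvec {n : ℕ} (hn : 0 < n) : ∃ x : Fin n → ℝ, ∑ i, x i ^ 2 = 1 := by
  refine ⟨Pi.single ⟨0, hn⟩ 1, ?_⟩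
  rw [Finset.sum_eq_single ⟨0, hn⟩]
  · simp
  · intro j _ hj; simp [Pi.single_apply, hj]
  · intro h; exact absurd (Finset.mem_univ _) h

lemma eigMin_pos_of_posDef {n : ℕ} (hn : 0 < n) {M : Matrix (Fin n) (Fin n) ℝ}
    (hM : M.PosDef) : 0 < eigMin M := by
  obtain ⟨x0, hx0⟩ := exists_unitvec (n := n) hn
  have hne : {r : ℝ | ∃ x : Fin n → ℝ, ∑ i, x i ^ 2 = 1 ∧ r = x ⬝ᵥ M.mulVec x}.Nonempty :=
    ⟨x0 ⬝ᵥ M.mulVec x0, x0, hx0, rfl⟩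
  have hmem := (isCompact_rayleigh M).sInf_mem hne
  obtain ⟨y, hy, hyr⟩ := hmem
  have hyne : y ≠ 0 := by
    intro h
    rw [h] at hy
    simp at hy
  have := hM.dotProduct_mulVec_pos hyne
  rw [eigMin, hyr]
  simpa using this

lemma lam_le_eigMin {n : ℕ} (hn : 0 < n) {Ahat : Matrix (Fin n) (Fin n) ℝ}
    (hAhat : Ahat.PosSemidef) {lam : ℝ} (hlam : 0 < lam) :
    lam ≤ eigMin (Ahat + lam • (1 : Matrix (Fin n) (Fin n) ℝ)) := by
  obtain ⟨x0, hx0⟩ := exists_unitvec (n := n) hn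
  refine le_csInf ⟨_, ⟨x0, hx0, rfl⟩⟩ ?_
  rintro r ⟨x, hx, rfl⟩
  have h1 : (Ahat + lam • (1 : Matrix (Fin n) (Fin n) ℝ)).mulVec x
      = Ahat.mulVec x + lam • x := by
    rw [Matrix.add_mulVec, Matrix.smul_mulVec, Matrix.one_mulVec]
  rw [h1, dotProduct_add]
  have h2 : (0:ℝ) ≤ x ⬝ᵥ Ahat.mulVec x := by simpa using hAhat.dotProduct_mulVec_nonneg x
  have h3 : x ⬝ᵥ (lam • x) = lam * ∑ i, x i ^ 2 := by
    rw [dotProduct_smul]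
    simp [dotProduct, Finset.mul_sum, sq]
  rw [h3, hx]
  linarith

end Rayleigh
section OpBounds

lemma normsq_symm {n : ℕ} (v : Fin n → ℝ) :
    ‖(WithLp.equiv 2 (Fin n → ℝ)).symm v‖ ^ 2 = ∑ i, v i ^ 2 := by
  rw [norm_symm]; exact Real.sq_sqrt (sumsq_nonneg v)

lemma dot_le_norm {n : ℕ} (v w : Fin n → ℝ) :
    v ⬝ᵥ w ≤ ‖(WithLp.equiv 2 (Fin n → ℝ)).symm v‖ * ‖(WithLp.equiv 2 (Fin n → ℝ)).symm w‖ := by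
  have h : v ⬝ᵥ w = inner (𝕜 := ℝ) ((WithLp.equiv 2 (Fin n → ℝ)).symm v)
      ((WithLp.equiv 2 (Fin n → ℝ)).symm w) := by
    rw [PiLp.inner_apply]
    simp [dotProduct, mul_comm]
  rw [h]
  exact real_inner_le_norm _ _

lemma dot_self_eq {n : ℕ} (v : Fin n → ℝ) : v ⬝ᵥ v = ∑ i, v i ^ 2 := by
  simp [dotProduct, sq]

lemma toCLM_mul {m k n : ℕ} (P : Matrix (Fin m) (Fin k) ℝ) (Q : Matrix (Fin k) (Fin n) ℝ) :
    toCLM (P * Q) = (toCLM P).comp (toCLM Q) := by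
  apply ContinuousLinearMap.ext
  intro y
  simp only [ContinuousLinearMap.comp_apply, toCLM_apply, Equiv.apply_symm_apply,
    ← Matrix.mulVec_mulVec]

lemma toCLM_sub {m n : ℕ} (P Q : Matrix (Fin m) (Fin n) ℝ) :
    toCLM (P - Q) = toCLM P - toCLM Q := by
  apply ContinuousLinearMap.ext
  intro y
  simp only [ContinuousLinearMap.sub_apply, toCLM_apply, Matrix.sub_mulVec,
    WithLp.equiv_symm_apply, WithLp.toLp_sub]

lemma toCLM_add {m n : ℕ} (P Q : Matrix (Fin m) (Fin n) ℝ) :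
    toCLM (P + Q) = toCLM P + toCLM Q := by
  apply ContinuousLinearMap.ext
  intro y
  simp only [ContinuousLinearMap.add_apply, toCLM_apply, Matrix.add_mulVec,
    WithLp.equiv_symm_apply, WithLp.toLp_add]

lemma specNorm_nonneg {m n : ℕ} (M : Matrix (Fin m) (Fin n) ℝ) : 0 ≤ specNorm M := by
  rw [specNorm_eq]; exact norm_nonneg _

lemma specNorm_sub_le {m n : ℕ} (P Q : Matrix (Fin m) (Fin n) ℝ) :
    specNorm (P - Q) ≤ specNorm P + specNorm Q := by
  rw [specNorm_eq, specNorm_eq, specNorm_eq, toCLM_sub]; exact norm_sub_le _ _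

lemma specNorm_add_le {m n : ℕ} (P Q : Matrix (Fin m) (Fin n) ℝ) :
    specNorm (P + Q) ≤ specNorm P + specNorm Q := by
  rw [specNorm_eq, specNorm_eq, specNorm_eq, toCLM_add]; exact norm_add_le _ _

lemma specNorm_mul_le {m k n : ℕ} (P : Matrix (Fin m) (Fin k) ℝ) (Q : Matrix (Fin k) (Fin n) ℝ) :
    specNorm (P * Q) ≤ specNorm P * specNorm Q := by
  rw [specNorm_eq, specNorm_eq, specNorm_eq, toCLM_mul]
  exact ContinuousLinearMap.opNorm_comp_le _ _

lemma specNorm_smul_one_le {n : ℕ} {lam : ℝ} (hlam : 0 ≤ lam) :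
    specNorm (lam • (1 : Matrix (Fin n) (Fin n) ℝ)) ≤ lam := by
  rw [specNorm_eq]
  apply ContinuousLinearMap.opNorm_le_bound _ hlam
  intro x
  have h : toCLM (lam • (1 : Matrix (Fin n) (Fin n) ℝ)) x = lam • x := by
    rw [toCLM_apply, Matrix.smul_mulVec, Matrix.one_mulVec, WithLp.equiv_symm_apply, WithLp.toLp_smul]
    simp
  rw [h, norm_smul, Real.norm_eq_abs, abs_of_nonneg hlam]

lemma eigMax_nonneg {m : ℕ} {B : Matrix (Fin m) (Fin m) ℝ} (hB : B.PosSemidef) :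
    0 ≤ eigMax B := by
  rcases Nat.eq_zero_or_pos m with hm | hm
  · subst hm
    have : {r : ℝ | ∃ x : Fin 0 → ℝ, ∑ i, x i ^ 2 = 1 ∧ r = x ⬝ᵥ B.mulVec x} = ∅ := by
      ext r; simp
    rw [eigMax, this, Real.sSup_empty]
  · obtain ⟨x0, hx0⟩ := exists_unitvec (n := m) hm
    have h0 : (0:ℝ) ≤ x0 ⬝ᵥ B.mulVec x0 := by simpa using hB.dotProduct_mulVec_nonneg x0
    exact le_trans h0 (le_csSup (bddAbove_rayleigh B) ⟨x0, hx0, rfl⟩)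

lemma sqrt_dot_swap {m : ℕ} {B : Matrix (Fin m) (Fin m) ℝ} (hB : B.PosSemidef)
    (v : Fin m → ℝ) :
    v ⬝ᵥ B.mulVec v = (hB.sqrt *ᵥ v) ⬝ᵥ (hB.sqrt *ᵥ v) := by
  have hsym : (hB.sqrt)ᵀ = hB.sqrt := by
    have h := hB.sqrt_isHermitian
    rwa [Matrix.IsHermitian, Matrix.conjTranspose_eq_transpose_of_trivial] at h
  conv_lhs => rw [← hB.sqrt_mul_self]
  rw [← Matrix.mulVec_mulVec, Matrix.dotProduct_mulVec, ← Matrix.mulVec_transpose, hsym]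

lemma specNorm_sqrt_le {m : ℕ} {B : Matrix (Fin m) (Fin m) ℝ} (hB : B.PosSemidef) :
    specNorm hB.sqrt ≤ Real.sqrt (eigMax B) := by
  rw [specNorm_eq]
  apply ContinuousLinearMap.opNorm_le_bound _ (Real.sqrt_nonneg _)
  intro x
  have hkey : ‖toCLM hB.sqrt x‖ ^ 2
      = ((WithLp.equiv 2 (Fin m → ℝ)) x) ⬝ᵥ B.mulVec ((WithLp.equiv 2 (Fin m → ℝ)) x) := by
    rw [toCLM_apply, normsq_symm, ← dot_self_eq, sqrt_dot_swap hB]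
  have h2 : ∑ i, ((WithLp.equiv 2 (Fin m → ℝ)) x) i ^ 2 = ‖x‖ ^ 2 := by
    rw [← normsq_symm ((WithLp.equiv 2 (Fin m → ℝ)) x)]; simp
  have hray := rayleigh_le_eigMax B ((WithLp.equiv 2 (Fin m → ℝ)) x)
  rw [h2] at hray
  have hsq : ‖toCLM hB.sqrt x‖ ^ 2 ≤ eigMax B * ‖x‖ ^ 2 := by rw [hkey]; exact hray
  have h1 := Real.sqrt_le_sqrt hsq
  rwa [Real.sqrt_sq (norm_nonneg _), Real.sqrt_mul (eigMax_nonneg hB),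
    Real.sqrt_sq (norm_nonneg x)] at h1

end OpBounds
section InvBounds

lemma specNorm_inv_le {n : ℕ} {M : Matrix (Fin n) (Fin n) ℝ}
    (hdet : IsUnit M.det) (hpos : 0 < eigMin M) :
    specNorm M⁻¹ ≤ 1 / eigMin M := by
  rw [specNorm_eq]
  apply ContinuousLinearMap.opNorm_le_bound _ (by positivity)
  intro x
  set v := (WithLp.equiv 2 (Fin n → ℝ)) x with hv
  set y := M⁻¹ *ᵥ v with hy
  have hMy : M *ᵥ y = v := by
    rw [hy, Matrix.mulVec_mulVec, Matrix.mul_nonsing_inv _ hdet, Matrix.one_mulVec]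
  have hray := eigMin_le_rayleigh M y
  have hdot : y ⬝ᵥ M.mulVec y = y ⬝ᵥ v := by rw [hMy]
  have hcs : y ⬝ᵥ v ≤ ‖(WithLp.equiv 2 (Fin n → ℝ)).symm y‖ * ‖x‖ := by
    have := dot_le_norm y v
    simpa [hv] using this
  set t := ‖(WithLp.equiv 2 (Fin n → ℝ)).symm y‖ with ht
  have hsum : ∑ i, y i ^ 2 = t ^ 2 := (normsq_symm y).symm
  have hnx : ‖toCLM M⁻¹ x‖ = t := by rw [toCLM_apply]
  rw [hnx]
  have hineq : eigMin M * t ^ 2 ≤ t * ‖x‖ := by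
    calc eigMin M * t ^ 2 = eigMin M * ∑ i, y i ^ 2 := by rw [hsum]
    _ ≤ y ⬝ᵥ M.mulVec y := hray
    _ = y ⬝ᵥ v := hdot
    _ ≤ t * ‖x‖ := hcs
  have htnn : (0:ℝ) ≤ t := ht ▸ norm_nonneg _
  rcases eq_or_lt_of_le htnn with h0 | h0
  · rw [← h0]; positivity
  · rw [one_div, inv_mul_eq_div, le_div_iff₀ hpos]
    nlinarith
end InvBounds
section Final

lemma specNorm_sqrtinv_le {d : ℕ} (hd : 0 < d) {A : Matrix (Fin d) (Fin d) ℝ}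
    (hA : A.PosDef) :
    specNorm (hA.posSemidef.sqrt)⁻¹ ≤ 1 / Real.sqrt (eigMin A) := by
  have hν : 0 < eigMin A := eigMin_pos_of_posDef hd hA
  set s := hA.posSemidef.sqrt with hs
  have hsdet : IsUnit s.det := by
    have hm : s.det * s.det = A.det := by rw [← Matrix.det_mul, hA.posSemidef.sqrt_mul_self]
    refine isUnit_iff_ne_zero.mpr fun h => hA.det_pos.ne' ?_
    rw [h, zero_mul] at hm
    exact hm.symm
  rw [specNorm_eq]
  apply ContinuousLinearMap.opNorm_le_bound _ (by positivity)
  intro x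
  set v := (WithLp.equiv 2 (Fin d → ℝ)) x with hv
  set y := s⁻¹ *ᵥ v with hy
  have hsy : s *ᵥ y = v := by
    rw [hy, Matrix.mulVec_mulVec, Matrix.mul_nonsing_inv _ hsdet, Matrix.one_mulVec]
  have hray := eigMin_le_rayleigh A y
  have hswap : y ⬝ᵥ A.mulVec y = ‖x‖ ^ 2 := by
    rw [sqrt_dot_swap hA.posSemidef y, ← hs, hsy, dot_self_eq]
    rw [← normsq_symm v, hv]
    simp
  set t := ‖(WithLp.equiv 2 (Fin d → ℝ)).symm y‖ with ht
  have htnn : (0:ℝ) ≤ t := ht ▸ norm_nonneg _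
  have hsum : ∑ i, y i ^ 2 = t ^ 2 := (normsq_symm y).symm
  have hnx : ‖toCLM s⁻¹ x‖ = t := by rw [toCLM_apply]
  rw [hnx]
  have hineq : eigMin A * t ^ 2 ≤ ‖x‖ ^ 2 := by
    rw [← hsum, ← hswap]; exact hray
  have hsq : (Real.sqrt (eigMin A) * t) ^ 2 ≤ ‖x‖ ^ 2 := by
    rw [mul_pow, Real.sq_sqrt hν.le]; exact hineq
  have h1 := Real.sqrt_le_sqrt hsq
  rw [Real.sqrt_sq (by positivity), Real.sqrt_sq (norm_nonneg _)] at h1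
  rw [one_div, inv_mul_eq_div, le_div_iff₀ (Real.sqrt_pos.mpr hν)]
  linarith [h1, mul_comm t (Real.sqrt (eigMin A))]

lemma posDef_smul_one {n : ℕ} {lam : ℝ} (h : 0 < lam) :
    (lam • (1 : Matrix (Fin n) (Fin n) ℝ)).PosDef := by
  refine Matrix.PosDef.of_dotProduct_mulVec_pos ?_ ?_
  · unfold Matrix.IsHermitian
    rw [Matrix.conjTranspose_smul, Matrix.conjTranspose_one]
    simp
  · intro x hx
    have h1 : (lam • (1 : Matrix (Fin n) (Fin n) ℝ)) *ᵥ x = lam • x := by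
      rw [Matrix.smul_mulVec, Matrix.one_mulVec]
    rw [h1]
    have hsx : star x = x := by funext i; simp
    rw [hsx, dotProduct_smul, smul_eq_mul]
    have hxx : 0 < x ⬝ᵥ x := by
      rw [dot_self_eq]
      have hne : ∃ i, x i ≠ 0 := by
        by_contra hc; push_neg at hc; exact hx (funext hc)
      obtain ⟨i, hi⟩ := hne
      have h2 : 0 < x i ^ 2 := by positivity
      exact lt_of_lt_of_le h2
        (Finset.single_le_sum (f := fun j => x j ^ 2) (fun j _ => sq_nonneg _)
          (Finset.mem_univ i))
    exact mul_pos h hxx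

end Final


/-- Deterministic perturbation bound for the regularized conditional
operator: with `A` positive definite, `Â` positive semidefinite, `B` positive
semidefinite, and `C = B^{1/2} V A^{1/2}` for a contraction `V`, the regularized error is
bounded by the stated two-term estimate. -/
theorem stmt5 {d m : ℕ}
    (A Ahat : Matrix (Fin d) (Fin d) ℝ) (hA : A.PosDef) (hAhat : Ahat.PosSemidef)
    (B : Matrix (Fin m) (Fin m) ℝ) (hB : B.PosSemidef)
    (V : Matrix (Fin m) (Fin d) ℝ) (hV : specNorm V ≤ 1)
    (C : Matrix (Fin m) (Fin d) ℝ) (hC : C = hB.sqrt * V * hA.posSemidef.sqrt)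
    (Chat : Matrix (Fin m) (Fin d) ℝ) (lam : ℝ) (hlam : 0 < lam) :
    specNorm (C * A⁻¹ - Chat * (Ahat + lam • 1)⁻¹) ≤
      Real.sqrt (eigMax B) * (specNorm (Ahat - A) + lam) /
        (Real.sqrt (eigMin A) * eigMin (Ahat + lam • 1)) +
      specNorm (Chat - C) / eigMin (Ahat + lam • 1) := by
  rcases Nat.eq_zero_or_pos d with hd | hd
  · subst hd
    have hspec : specNorm (C * A⁻¹ - Chat * (Ahat + lam • 1)⁻¹) = 0 := by
      have h : {r : ℝ | ∃ x : Fin 0 → ℝ, ∑ i, x i ^ 2 = 1 ∧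
          r = vecNorm ((C * A⁻¹ - Chat * (Ahat + lam • 1)⁻¹) *ᵥ x)} = ∅ := by
        ext r; simp
      rw [specNorm, h, Real.sSup_empty]
    have hmin : eigMin (Ahat + lam • (1 : Matrix (Fin 0) (Fin 0) ℝ)) = 0 := by
      have h : {r : ℝ | ∃ x : Fin 0 → ℝ, ∑ i, x i ^ 2 = 1 ∧
          r = x ⬝ᵥ (Ahat + lam • 1).mulVec x} = ∅ := by
        ext r; simp
      rw [eigMin, h, Real.sInf_empty]
    rw [hspec, hmin]
    simp
  · set Mt := Ahat + lam • (1 : Matrix (Fin d) (Fin d) ℝ) with hMt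
    have hMpd : Mt.PosDef := Matrix.PosDef.posSemidef_add hAhat (posDef_smul_one hlam)
    have hMdet : IsUnit Mt.det := hMpd.det_pos.ne'.isUnit
    have hAdet : IsUnit A.det := hA.det_pos.ne'.isUnit
    set s := hA.posSemidef.sqrt with hs
    have hsdet : IsUnit s.det := by
      have hm : s.det * s.det = A.det := by rw [← Matrix.det_mul, hA.posSemidef.sqrt_mul_self]
      refine isUnit_iff_ne_zero.mpr fun h => hA.det_pos.ne' ?_
      rw [h, zero_mul] at hm
      exact hm.symm
    have hμ : lam ≤ eigMin Mt := lam_le_eigMin hd hAhat hlam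
    have hμpos : 0 < eigMin Mt := lt_of_lt_of_le hlam hμ
    have hν : 0 < eigMin A := eigMin_pos_of_posDef hd hA
    have hCA : C * A⁻¹ = hB.sqrt * V * s⁻¹ := by
      rw [hC]
      have hAinv : A⁻¹ = s⁻¹ * s⁻¹ := by
        conv_lhs => rw [← hA.posSemidef.sqrt_mul_self]
        rw [Matrix.mul_inv_rev]
      rw [hAinv, Matrix.mul_assoc (hB.sqrt * V), ← Matrix.mul_assoc s,
        Matrix.mul_nonsing_inv _ hsdet, Matrix.one_mul]
    have hid : C * A⁻¹ - Chat * Mt⁻¹ = (C * A⁻¹) * (Mt - A) * Mt⁻¹ - (Chat - C) * Mt⁻¹ := by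
      have e1 : C * A⁻¹ * Mt * Mt⁻¹ = C * A⁻¹ := by
        rw [Matrix.mul_assoc (C * A⁻¹), Matrix.mul_nonsing_inv _ hMdet, Matrix.mul_one]
      have e2 : C * A⁻¹ * A * Mt⁻¹ = C * Mt⁻¹ := by
        rw [Matrix.mul_assoc C, Matrix.nonsing_inv_mul _ hAdet, Matrix.mul_one]
      rw [Matrix.mul_sub, Matrix.sub_mul, Matrix.sub_mul, e1, e2]
      abel
    have n1 : specNorm hB.sqrt ≤ Real.sqrt (eigMax B) := specNorm_sqrt_le hB
    have n3 : specNorm s⁻¹ ≤ 1 / Real.sqrt (eigMin A) := specNorm_sqrtinv_le hd hA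
    have n4 : specNorm (Mt - A) ≤ specNorm (Ahat - A) + lam := by
      have h : Mt - A = (Ahat - A) + lam • (1 : Matrix (Fin d) (Fin d) ℝ) := by
        rw [hMt]; abel
      rw [h]
      exact le_trans (specNorm_add_le _ _)
        (by linarith [specNorm_smul_one_le (n := d) hlam.le])
    have n5 : specNorm Mt⁻¹ ≤ 1 / eigMin Mt := specNorm_inv_le hMdet hμpos
    have hq : specNorm (C * A⁻¹) ≤ Real.sqrt (eigMax B) * (1 / Real.sqrt (eigMin A)) := by
      rw [hCA]
      calc specNorm (hB.sqrt * V * s⁻¹)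
          ≤ specNorm (hB.sqrt * V) * specNorm s⁻¹ := specNorm_mul_le _ _
        _ ≤ (specNorm hB.sqrt * specNorm V) * specNorm s⁻¹ :=
            mul_le_mul_of_nonneg_right (specNorm_mul_le _ _) (specNorm_nonneg _)
        _ ≤ (Real.sqrt (eigMax B) * 1) * (1 / Real.sqrt (eigMin A)) := by
            apply mul_le_mul ?_ n3 (specNorm_nonneg _) (by positivity)
            exact mul_le_mul n1 hV (specNorm_nonneg _) (Real.sqrt_nonneg _)
        _ = Real.sqrt (eigMax B) * (1 / Real.sqrt (eigMin A)) := by ring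
    have key1 : specNorm ((C * A⁻¹) * (Mt - A) * Mt⁻¹) ≤
        Real.sqrt (eigMax B) * (1 / Real.sqrt (eigMin A)) * (specNorm (Ahat - A) + lam) *
          (1 / eigMin Mt) := by
      calc specNorm ((C * A⁻¹) * (Mt - A) * Mt⁻¹)
          ≤ specNorm ((C * A⁻¹) * (Mt - A)) * specNorm Mt⁻¹ := specNorm_mul_le _ _
        _ ≤ (specNorm (C * A⁻¹) * specNorm (Mt - A)) * specNorm Mt⁻¹ :=
            mul_le_mul_of_nonneg_right (specNorm_mul_le _ _) (specNorm_nonneg _)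
        _ ≤ (Real.sqrt (eigMax B) * (1 / Real.sqrt (eigMin A)) *
              (specNorm (Ahat - A) + lam)) * (1 / eigMin Mt) := by
            apply mul_le_mul ?_ n5 (specNorm_nonneg _) ?_
            · apply mul_le_mul hq n4 (specNorm_nonneg _) (by positivity)
            · apply mul_nonneg (by positivity)
              linarith [specNorm_nonneg (Ahat - A)]
    have key2 : specNorm ((Chat - C) * Mt⁻¹) ≤ specNorm (Chat - C) * (1 / eigMin Mt) :=
      le_trans (specNorm_mul_le _ _)
        (mul_le_mul_of_nonneg_left n5 (specNorm_nonneg _))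
    have hsne : Real.sqrt (eigMin A) ≠ 0 := (Real.sqrt_pos.mpr hν).ne'
    have hμne : eigMin Mt ≠ 0 := hμpos.ne'
    calc specNorm (C * A⁻¹ - Chat * Mt⁻¹)
        = specNorm ((C * A⁻¹) * (Mt - A) * Mt⁻¹ - (Chat - C) * Mt⁻¹) := by rw [hid]
      _ ≤ specNorm ((C * A⁻¹) * (Mt - A) * Mt⁻¹) + specNorm ((Chat - C) * Mt⁻¹) :=
          specNorm_sub_le _ _
      _ ≤ Real.sqrt (eigMax B) * (1 / Real.sqrt (eigMin A)) * (specNorm (Ahat - A) + lam) *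
            (1 / eigMin Mt) + specNorm (Chat - C) * (1 / eigMin Mt) := add_le_add key1 key2
      _ = Real.sqrt (eigMax B) * (specNorm (Ahat - A) + lam) /
            (Real.sqrt (eigMin A) * eigMin Mt) + specNorm (Chat - C) / eigMin Mt := by
          field_simp
end
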